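/- If T is a singular subset of an association scheme S, then the complex product O^ϑ(S)O_ϑ(S) is contained in T. -/

import Mathlib

open scoped Classical

/-- An association scheme of class `d` on a nonempty finite set `X`:
a partition of `X × X` into nonempty relations `r 0, …, r d` with
`r 0` the diagonal, closed under converse (`star`), and with
intersection numbers `pNum i j k`. -/
structure AssocScheme (X : Type*) [Fintype X] [Nonempty X] (d : ℕ) where
  r : Fin (d + 1) → Set (X × X)
  r_nonempty : ∀ i, (r i).Nonempty
  existsUnique_rel : ∀ q : X × X, ∃! i, q ∈ r i
  r_zero : r 0 = {q : X × X | q.1 = q.2}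
  star : Fin (d + 1) → Fin (d + 1)
  mem_star : ∀ (i : Fin (d + 1)) (q : X × X), q ∈ r (star i) ↔ (q.2, q.1) ∈ r i
  pNum : Fin (d + 1) → Fin (d + 1) → Fin (d + 1) → ℕ
  ncard_eq : ∀ (i j k : Fin (d + 1)), ∀ q ∈ r k,
    {z : X | (q.1, z) ∈ r i ∧ (z, q.2) ∈ r j}.ncard = pNum i j k

namespace AssocScheme

variable {X : Type*} [Fintype X] [Nonempty X] {d : ℕ}

/-- The valency `k_i = p_{i i*}^0` of the relation `R_i`. -/
def val (S : AssocScheme X d) (i : Fin (d + 1)) : ℕ := S.pNum i (S.star i) 0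

/-- The complex product `UV = {R_k : p_{uv}^k > 0 for some R_u ∈ U, R_v ∈ V}`. -/
def cmul (S : AssocScheme X d) (U V : Set (Fin (d + 1))) : Set (Fin (d + 1)) :=
  {k | ∃ u ∈ U, ∃ v ∈ V, 0 < S.pNum u v k}

/-- A nonempty subset `T` is closed if `T*T ⊆ T`. -/
def IsClosedSubset (S : AssocScheme X d) (T : Set (Fin (d + 1))) : Prop :=
  T.Nonempty ∧ S.cmul (S.star '' T) T ⊆ T

/-- The thin radical `O_ϑ(S) = {R_i : k_i = 1}`. -/
def thinRadical (S : AssocScheme X d) : Set (Fin (d + 1)) := {i | S.val i = 1}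

/-- A closed subset `T` is strongly normal if `R_{i*} T R_i ⊆ T` for all `i`. -/
def IsStronglyNormal (S : AssocScheme X d) (T : Set (Fin (d + 1))) : Prop :=
  S.IsClosedSubset T ∧ ∀ i : Fin (d + 1), S.cmul (S.cmul {S.star i} T) {i} ⊆ T

/-- The thin residue `O^ϑ(S)`: the intersection of all strongly normal closed subsets. -/
def thinResidue (S : AssocScheme X d) : Set (Fin (d + 1)) :=
  ⋂₀ {T | S.IsStronglyNormal T}

/-- `⟨H⟩`: the intersection of all closed subsets containing `H`. -/
def closure (S : AssocScheme X d) (H : Set (Fin (d + 1))) : Set (Fin (d + 1)) :=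
  ⋂₀ {T | S.IsClosedSubset T ∧ H ⊆ T}

/-- The adjacency matrix `A̅_i` of `R_i`, with entries in `𝔽`. -/
noncomputable def adj (S : AssocScheme X d) (𝔽 : Type*) [Field 𝔽] (i : Fin (d + 1)) :
    Matrix X X 𝔽 :=
  Matrix.of fun x y => if (x, y) ∈ S.r i then 1 else 0

/-- `v` spans a trivial `𝔽S`-submodule of the regular `𝔽S`-module:
`v` is a nonzero element of `𝔽S` with `A̅_i v = k̅_i v` for all `i`. -/
def IsTrivialVector (S : AssocScheme X d) (𝔽 : Type*) [Field 𝔽] (v : Matrix X X 𝔽) : Prop :=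
  v ≠ 0 ∧ v ∈ Submodule.span 𝔽 (Set.range (S.adj 𝔽)) ∧
    ∀ i : Fin (d + 1), S.adj 𝔽 i * v = (S.val i : 𝔽) • v

/-- `S` is `p`-transitive over `𝔽` (of characteristic `p`) if the regular `𝔽S`-module
contains a unique trivial `𝔽S`-submodule. -/
def IsPTransitive (S : AssocScheme X d) (𝔽 : Type*) [Field 𝔽] : Prop :=
  ∃! W : Submodule 𝔽 (Matrix X X 𝔽),
    ∃ v : Matrix X X 𝔽, S.IsTrivialVector 𝔽 v ∧ W = Submodule.span 𝔽 {v}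

/-- A subset `T ⊆ S` is singular if `O_ϑ(S) ⊆ T` and
`R_x R_{y*} R_y R_z ⊆ T` for all `R_x ∈ O_ϑ(S)`, `R_y ∈ S`, `R_z ∈ T`. -/
def IsSingular (S : AssocScheme X d) (T : Set (Fin (d + 1))) : Prop :=
  S.thinRadical ⊆ T ∧ ∀ x ∈ S.thinRadical, ∀ y : Fin (d + 1), ∀ z ∈ T,
    S.cmul (S.cmul (S.cmul {x} {S.star y}) {y}) {z} ⊆ T

/-- `S_{p'} = {R_i ∈ S : p ∤ k_i}`. -/
def pPrimePart (S : AssocScheme X d) (p : ℕ) : Set (Fin (d + 1)) :=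
  {i | ¬ p ∣ S.val i}

end AssocScheme

namespace AssocScheme

variable {X : Type*} [Fintype X] [Nonempty X] {d : ℕ} (S : AssocScheme X d)

/-- The class of a pair of points. -/
noncomputable def cls (x y : X) : Fin (d + 1) :=
  (S.existsUnique_rel (x, y)).exists.choose

lemma mem_cls (x y : X) : (x, y) ∈ S.r (S.cls x y) :=
  (S.existsUnique_rel (x, y)).exists.choose_spec

lemma r_unique {x y : X} {i j : Fin (d + 1)}
    (hi : (x, y) ∈ S.r i) (hj : (x, y) ∈ S.r j) : i = j :=
  (S.existsUnique_rel (x, y)).unique hi hj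

lemma cls_eq {x y : X} {i : Fin (d + 1)} (h : (x, y) ∈ S.r i) : S.cls x y = i :=
  S.r_unique (S.mem_cls x y) h

lemma mem_r_star {i : Fin (d + 1)} {x y : X} :
    (x, y) ∈ S.r (S.star i) ↔ (y, x) ∈ S.r i :=
  S.mem_star i (x, y)

lemma star_star (i : Fin (d + 1)) : S.star (S.star i) = i := by
  obtain ⟨⟨x, y⟩, h⟩ := S.r_nonempty i
  exact S.r_unique (S.mem_r_star.mpr (S.mem_r_star.mpr h)) h

lemma mem_r_zero {x y : X} : (x, y) ∈ S.r 0 ↔ x = y := by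
  rw [S.r_zero]; exact Iff.rfl

lemma mem_r_zero_self (x : X) : (x, x) ∈ S.r 0 := S.mem_r_zero.mpr rfl

lemma star_zero : S.star (0 : Fin (d + 1)) = 0 := by
  obtain ⟨x⟩ := ‹Nonempty X›
  exact S.r_unique (S.mem_r_star.mpr (S.mem_r_zero_self x)) (S.mem_r_zero_self x)

lemma pNum_pos_iff {i j k : Fin (d + 1)} {x y : X} (h : (x, y) ∈ S.r k) :
    0 < S.pNum i j k ↔ ∃ z, (x, z) ∈ S.r i ∧ (z, y) ∈ S.r j := by
  rw [← S.ncard_eq i j k (x, y) h, Set.ncard_pos (Set.toFinite _)]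
  exact ⟨fun ⟨z, hz⟩ => ⟨z, hz⟩, fun ⟨z, hz⟩ => ⟨z, hz⟩⟩

lemma mem_cmul_pair {a b k : Fin (d + 1)} :
    k ∈ S.cmul {a} {b} ↔ 0 < S.pNum a b k := by
  simp [cmul]

lemma cls_mem_cmul_cls (x z y : X) :
    S.cls x y ∈ S.cmul {S.cls x z} {S.cls z y} := by
  rw [S.mem_cmul_pair, S.pNum_pos_iff (S.mem_cls x y)]
  exact ⟨z, S.mem_cls x z, S.mem_cls z y⟩

lemma exists_nbr (x : X) (i : Fin (d + 1)) : ∃ y, (x, y) ∈ S.r i := by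
  obtain ⟨⟨a, b⟩, hab⟩ := S.r_nonempty i
  have pos : 0 < S.pNum i (S.star i) 0 :=
    (S.pNum_pos_iff (S.mem_r_zero_self a)).mpr ⟨b, hab, S.mem_r_star.mpr hab⟩
  obtain ⟨z, hz, -⟩ := (S.pNum_pos_iff (S.mem_r_zero_self x)).mp pos
  exact ⟨z, hz⟩

lemma val_pos (i : Fin (d + 1)) : 0 < S.val i := by
  obtain ⟨⟨a, b⟩, hab⟩ := S.r_nonempty i
  exact (S.pNum_pos_iff (S.mem_r_zero_self a)).mpr ⟨b, hab, S.mem_r_star.mpr hab⟩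

lemma deg_card (x : X) (i : Fin (d + 1)) :
    (Finset.univ.filter (fun z => (x, z) ∈ S.r i)).card = S.val i := by
  have h := S.ncard_eq i (S.star i) 0 (x, x) (S.mem_r_zero_self x)
  have hset : {z : X | ((x, x).1, z) ∈ S.r i ∧ (z, (x, x).2) ∈ S.r (S.star i)}
      = ↑(Finset.univ.filter (fun z => (x, z) ∈ S.r i)) := by
    ext z
    simp only [Set.mem_setOf_eq, Finset.coe_filter, Finset.mem_univ, true_and]
    exact ⟨fun hh => hh.1, fun hh => ⟨hh, S.mem_r_star.mpr hh⟩⟩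
  rw [hset, Set.ncard_coe_finset] at h
  exact h

lemma val_zero : S.val (0 : Fin (d + 1)) = 1 := by
  obtain ⟨x⟩ := ‹Nonempty X›
  have h := S.ncard_eq 0 (S.star 0) 0 (x, x) (S.mem_r_zero_self x)
  have hset : {z : X | ((x, x).1, z) ∈ S.r 0 ∧ (z, (x, x).2) ∈ S.r (S.star 0)} = {x} := by
    rw [S.star_zero]
    ext z
    simp only [Set.mem_setOf_eq, Set.mem_singleton_iff]
    constructor
    · intro hh; exact (S.mem_r_zero.mp hh.1).symm
    · rintro rfl; exact ⟨S.mem_r_zero_self z, S.mem_r_zero_self z⟩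
  rw [hset, Set.ncard_singleton] at h
  exact h.symm

lemma zero_mem_thinRadical : (0 : Fin (d + 1)) ∈ S.thinRadical := S.val_zero


lemma card_pairs_fst (P : X × X → Prop) :
    (Finset.univ.filter P).card = ∑ w : X, (Finset.univ.filter (fun b => P (w, b))).card := by
  have hsplit : Finset.univ.filter P = (Finset.univ : Finset X).biUnion
      (fun w => (Finset.univ.filter (fun b => P (w, b))).image (fun b => (w, b))) := by
    ext q
    simp only [Finset.mem_filter, Finset.mem_univ, true_and, Finset.mem_biUnion,
      Finset.mem_image]
    constructor
    · intro h
      exact ⟨q.1, q.2, h, rfl⟩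
    · rintro ⟨w, b, hb, rfl⟩
      exact hb
  rw [hsplit, Finset.card_biUnion]
  · refine Finset.sum_congr rfl fun w _ => ?_
    exact Finset.card_image_of_injective _ (fun a b h => by injection h)
  · intro w _ w' _ hww'
    apply Finset.disjoint_left.mpr
    rintro q hq hq'
    simp only [Finset.mem_image] at hq hq'
    obtain ⟨b, -, rfl⟩ := hq
    obtain ⟨b', -, h⟩ := hq'
    exact hww' (congrArg Prod.fst h).symm

lemma card_pairs_snd (P : X × X → Prop) :
    (Finset.univ.filter P).card = ∑ w : X, (Finset.univ.filter (fun a => P (a, w))).card := by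
  have hsplit : Finset.univ.filter P = (Finset.univ : Finset X).biUnion
      (fun w => (Finset.univ.filter (fun a => P (a, w))).image (fun a => (a, w))) := by
    ext q
    simp only [Finset.mem_filter, Finset.mem_univ, true_and, Finset.mem_biUnion,
      Finset.mem_image]
    constructor
    · intro h
      exact ⟨q.2, q.1, h, rfl⟩
    · rintro ⟨w, b, hb, rfl⟩
      exact hb
  rw [hsplit, Finset.card_biUnion]
  · refine Finset.sum_congr rfl fun w _ => ?_
    exact Finset.card_image_of_injective _ (fun a b h => by injection h)
  · intro w _ w' _ hww'
    apply Finset.disjoint_left.mpr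
    rintro q hq hq'
    simp only [Finset.mem_image] at hq hq'
    obtain ⟨b, -, rfl⟩ := hq
    obtain ⟨b', -, h⟩ := hq'
    exact hww' (congrArg Prod.snd h).symm

lemma card_rel (i : Fin (d + 1)) :
    (Finset.univ.filter (fun q : X × X => q ∈ S.r i)).card = Fintype.card X * S.val i := by
  rw [card_pairs_fst (fun q : X × X => q ∈ S.r i)]
  rw [Finset.sum_congr rfl (fun x _ => S.deg_card x i), Finset.sum_const, Finset.card_univ,
    smul_eq_mul]

lemma card_rel_star (i : Fin (d + 1)) :
    (Finset.univ.filter (fun q : X × X => q ∈ S.r (S.star i))).card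
      = (Finset.univ.filter (fun q : X × X => q ∈ S.r i)).card := by
  apply Finset.card_nbij' (i := fun q => Prod.swap q) (j := fun q => Prod.swap q)
  · intro a ha
    simp only [Finset.mem_coe, Finset.mem_filter, Finset.mem_univ, true_and] at ha ⊢
    exact S.mem_star i a |>.mp ha
  · intro a ha
    simp only [Finset.mem_coe, Finset.mem_filter, Finset.mem_univ, true_and] at ha ⊢
    exact (S.mem_star i a.swap).mpr (by simpa using ha)
  · intro a _; exact Prod.swap_swap a
  · intro a _; exact Prod.swap_swap a

lemma val_star (i : Fin (d + 1)) : S.val (S.star i) = S.val i := by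
  have h := S.card_rel_star i
  rw [S.card_rel, S.card_rel] at h
  exact Nat.eq_of_mul_eq_mul_left Fintype.card_pos h

section Closed

variable {S}

lemma zero_mem_closed {C : Set (Fin (d + 1))} (hC : S.IsClosedSubset C) :
    (0 : Fin (d + 1)) ∈ C := by
  obtain ⟨t, ht⟩ := hC.1
  apply hC.2
  refine ⟨S.star t, ⟨t, ht, rfl⟩, t, ht, ?_⟩
  obtain ⟨x⟩ := ‹Nonempty X›
  obtain ⟨z, hz⟩ := S.exists_nbr x (S.star t)
  exact (S.pNum_pos_iff (S.mem_r_zero_self x)).mpr ⟨z, hz, S.mem_r_star.mp hz⟩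

lemma star_mem_closed {C : Set (Fin (d + 1))} (hC : S.IsClosedSubset C)
    {t : Fin (d + 1)} (ht : t ∈ C) : S.star t ∈ C := by
  apply hC.2
  refine ⟨S.star t, ⟨t, ht, rfl⟩, 0, zero_mem_closed hC, ?_⟩
  obtain ⟨⟨x, y⟩, hxy⟩ := S.r_nonempty (S.star t)
  exact (S.pNum_pos_iff hxy).mpr ⟨y, hxy, S.mem_r_zero_self y⟩

lemma cmul_mem_closed {C : Set (Fin (d + 1))} (hC : S.IsClosedSubset C)
    {a b k : Fin (d + 1)} (ha : a ∈ C) (hb : b ∈ C) (hk : k ∈ S.cmul {a} {b}) :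
    k ∈ C := by
  apply hC.2
  obtain ⟨u, hu, v, hv, hpos⟩ := hk
  simp only [Set.mem_singleton_iff] at hu hv
  rw [hu, hv] at hpos
  exact ⟨a, ⟨S.star a, star_mem_closed hC ha, S.star_star a⟩, b, hb, hpos⟩

lemma cls_symm (x y : X) : S.cls y x = S.star (S.cls x y) :=
  S.cls_eq (S.mem_r_star.mpr (S.mem_cls x y))

lemma co_refl {C : Set (Fin (d + 1))} (hC : S.IsClosedSubset C) (x : X) :
    S.cls x x ∈ C := by
  rw [S.cls_eq (S.mem_r_zero_self x)]
  exact zero_mem_closed hC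

lemma co_symm {C : Set (Fin (d + 1))} (hC : S.IsClosedSubset C) {x y : X}
    (h : S.cls x y ∈ C) : S.cls y x ∈ C := by
  rw [cls_symm]
  exact star_mem_closed hC h

lemma co_trans {C : Set (Fin (d + 1))} (hC : S.IsClosedSubset C) {x y z : X}
    (hxy : S.cls x y ∈ C) (hyz : S.cls y z ∈ C) : S.cls x z ∈ C :=
  cmul_mem_closed hC hxy hyz (S.cls_mem_cmul_cls x y z)

end Closed

lemma closure_isClosed (H : Set (Fin (d + 1))) : S.IsClosedSubset (S.closure H) := by
  constructor
  · exact ⟨0, Set.mem_sInter.mpr fun V hV => zero_mem_closed hV.1⟩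
  · intro k hk
    apply Set.mem_sInter.mpr
    intro V hV
    obtain ⟨u, hu, v, hv, hpos⟩ := hk
    obtain ⟨a, ha, rfl⟩ := hu
    have haV : a ∈ V := Set.mem_sInter.mp ha V hV
    have hvV : v ∈ V := Set.mem_sInter.mp hv V hV
    exact hV.1.2 ⟨S.star a, ⟨a, haV, rfl⟩, v, hvV, hpos⟩

lemma subset_closure (H : Set (Fin (d + 1))) : H ⊆ S.closure H :=
  fun x hx => Set.mem_sInter.mpr fun _ hV => hV.2 hx

lemma closure_min {H V : Set (Fin (d + 1))} (hV : S.IsClosedSubset V) (hHV : H ⊆ V) :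
    S.closure H ⊆ V :=
  Set.sInter_subset_of_mem ⟨hV, hHV⟩

/-- The generating set `⋃ c, c* c` of the thin residue. -/
def gens : Set (Fin (d + 1)) := ⋃ c, S.cmul {S.star c} {c}

/-- `T₀ = ⟨⋃ c, c* c⟩`. -/
def T0 : Set (Fin (d + 1)) := S.closure S.gens

lemma T0_closed : S.IsClosedSubset S.T0 := S.closure_isClosed _

lemma gens_subset_T0 : S.gens ⊆ S.T0 := S.subset_closure _

lemma co_common {γ p q : X} (c : Fin (d + 1))
    (h1 : (γ, p) ∈ S.r c) (h2 : (γ, q) ∈ S.r c) : S.cls p q ∈ S.T0 := by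
  apply S.gens_subset_T0
  apply Set.mem_iUnion.mpr ⟨c, _⟩
  rw [S.mem_cmul_pair, S.pNum_pos_iff (S.mem_cls p q)]
  exact ⟨γ, S.mem_r_star.mpr h1, h2⟩

/-- Classes `u` such that for every `(α,β) ∈ r u`, all `s*`-neighbours of `α` and `β`
are `T₀`-equivalent. -/
def Econj (s : Fin (d + 1)) : Set (Fin (d + 1)) :=
  {u | ∀ α β p q : X, (α, β) ∈ S.r u → (α, p) ∈ S.r (S.star s) →
    (β, q) ∈ S.r (S.star s) → S.cls p q ∈ S.T0}

lemma gens_subset_Econj (s : Fin (d + 1)) : S.gens ⊆ S.Econj s := by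
  intro u hu
  obtain ⟨c, hc⟩ := Set.mem_iUnion.mp hu
  intro α β p q hαβ hαp hβq
  obtain ⟨γ, hαγ, hγβ⟩ := (S.pNum_pos_iff hαβ).mp (S.mem_cmul_pair.mp hc)
  have hγα : (γ, α) ∈ S.r c := by
    have h := S.mem_r_star.mpr hαγ
    rwa [S.star_star] at h
  have pos : 0 < S.pNum (S.cls γ p) s c :=
    (S.pNum_pos_iff hγα).mpr ⟨p, S.mem_cls γ p, S.mem_r_star.mp hαp⟩
  obtain ⟨q', hγq', hq'β⟩ := (S.pNum_pos_iff hγβ).mp pos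
  have co1 : S.cls p q' ∈ S.T0 := S.co_common (S.cls γ p) (S.mem_cls γ p) hγq'
  have co2 : S.cls q' q ∈ S.T0 := S.co_common (S.star s) (S.mem_r_star.mpr hq'β) hβq
  exact co_trans S.T0_closed co1 co2

lemma Econj_closed (s : Fin (d + 1)) : S.IsClosedSubset (S.Econj s) := by
  constructor
  · refine ⟨0, ?_⟩
    intro α β p q hαβ hαp hβq
    have : α = β := S.mem_r_zero.mp hαβ
    subst this
    exact S.co_common (S.star s) hαp hβq
  · intro k hk
    obtain ⟨u, hu, b, hb, hpos⟩ := hk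
    obtain ⟨a, ha, rfl⟩ := hu
    intro α β p q hαβ hαp hβq
    obtain ⟨w, hαw, hwβ⟩ := (S.pNum_pos_iff hαβ).mp hpos
    have hwα : (w, α) ∈ S.r a := S.mem_r_star.mp hαw
    obtain ⟨t, hwt⟩ := S.exists_nbr w (S.star s)
    have co1 : S.cls t p ∈ S.T0 := ha w α t p hwα hwt hαp
    have co2 : S.cls t q ∈ S.T0 := hb w β t q hwβ hwt hβq
    exact co_trans S.T0_closed (co_symm S.T0_closed co1) co2

lemma T0_subset_Econj (s : Fin (d + 1)) : S.T0 ⊆ S.Econj s :=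
  S.closure_min (S.Econj_closed s) (S.gens_subset_Econj s)

lemma mem_Econj_of_exists {s u : Fin (d + 1)} {y z p q : X}
    (hyz : (y, z) ∈ S.r u) (hyp : (y, p) ∈ S.r (S.star s))
    (hzq : (z, q) ∈ S.r (S.star s)) (hpq : S.cls p q ∈ S.T0) :
    u ∈ S.Econj s := by
  have hm : 0 < S.pNum (S.star s) (S.cls p q) (S.cls y q) :=
    (S.pNum_pos_iff (S.mem_cls y q)).mpr ⟨p, hyp, S.mem_cls p q⟩
  have hu2 : 0 < S.pNum (S.cls y q) s u :=
    (S.pNum_pos_iff hyz).mpr ⟨q, S.mem_cls y q, S.mem_r_star.mp hzq⟩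
  intro α β p' q' hαβ hαp' hβq'
  obtain ⟨w, hαw, hwβ⟩ := (S.pNum_pos_iff hαβ).mp hu2
  obtain ⟨ρ, hαρ, hρw⟩ := (S.pNum_pos_iff hαw).mp hm
  have co1 : S.cls p' ρ ∈ S.T0 := S.co_common (S.star s) hαp' hαρ
  have co2 : S.cls ρ w ∈ S.T0 := by rw [S.cls_eq hρw]; exact hpq
  have co3 : S.cls w q' ∈ S.T0 := S.co_common (S.star s) (S.mem_r_star.mpr hwβ) hβq'
  exact co_trans S.T0_closed (co_trans S.T0_closed co1 co2) co3

lemma coset_card (A : Set (Fin (d + 1))) (x : X) :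
    (Finset.univ.filter (fun w => S.cls x w ∈ A)).card
      = ∑ t ∈ Finset.univ.filter (· ∈ A), S.val t := by
  have hU : Finset.univ.filter (fun w => S.cls x w ∈ A)
      = (Finset.univ.filter (· ∈ A)).biUnion
          (fun t => Finset.univ.filter (fun w => (x, w) ∈ S.r t)) := by
    ext w
    simp only [Finset.mem_filter, Finset.mem_univ, true_and, Finset.mem_biUnion]
    constructor
    · intro h
      exact ⟨S.cls x w, h, S.mem_cls x w⟩
    · rintro ⟨t, ht, hw⟩
      rwa [S.cls_eq hw]
  rw [hU, Finset.card_biUnion]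
  · exact Finset.sum_congr rfl fun t _ => S.deg_card x t
  · intro t _ t' _ htt'
    apply Finset.disjoint_left.mpr
    intro w hw hw'
    simp only [Finset.mem_filter, Finset.mem_univ, true_and] at hw hw'
    exact htt' (S.r_unique hw hw')

lemma Econj_subset_T0 (s : Fin (d + 1)) : S.Econj s ⊆ S.T0 := by
  intro u hu
  obtain ⟨⟨y, z⟩, hyz⟩ := S.r_nonempty u
  obtain ⟨p₀, hp₀⟩ := S.exists_nbr y (S.star s)
  set Fib : Finset X :=
    Finset.univ.filter (fun w => ∃ q, (w, q) ∈ S.r (S.star s) ∧ S.cls p₀ q ∈ S.T0) with hFibdef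
  set Tco : Finset X := Finset.univ.filter (fun w => S.cls y w ∈ S.T0) with hTcodef
  set Cst : Finset X := Finset.univ.filter (fun a => S.cls p₀ a ∈ S.T0) with hCstdef
  have hzFib : z ∈ Fib := by
    obtain ⟨q, hq⟩ := S.exists_nbr z (S.star s)
    rw [hFibdef, Finset.mem_filter]
    exact ⟨Finset.mem_univ z, ⟨q, hq, hu y z p₀ q hyz hp₀ hq⟩⟩
  have hsub : Tco ⊆ Fib := by
    intro w hw
    rw [hTcodef, Finset.mem_filter] at hw
    have hE : S.cls y w ∈ S.Econj s := S.T0_subset_Econj s hw.2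
    obtain ⟨q, hq⟩ := S.exists_nbr w (S.star s)
    rw [hFibdef, Finset.mem_filter]
    exact ⟨Finset.mem_univ w, ⟨q, hq, hE y w p₀ q (S.mem_cls y w) hp₀ hq⟩⟩
  -- the double counting
  obtain ⟨P, hPdef⟩ : ∃ P : X × X → Prop,
      P = fun zq => (zq.1, zq.2) ∈ S.r (S.star s) ∧ S.cls p₀ zq.2 ∈ S.T0 := ⟨_, rfl⟩
  have hB1 : (Finset.univ.filter P).card = Fib.card * S.val (S.star s) := by
    rw [card_pairs_fst P]
    have hfib : ∀ w : X,
        (Finset.univ.filter (fun b => P (w, b))).card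
          = if w ∈ Fib then S.val (S.star s) else 0 := by
      intro w
      by_cases hw : w ∈ Fib
      · simp only [hw, if_true]
        have hsame : Finset.univ.filter (fun b => P (w, b))
            = Finset.univ.filter (fun b => (w, b) ∈ S.r (S.star s)) := by
          ext b
          simp only [Finset.mem_filter, Finset.mem_univ, true_and, hPdef]
          refine ⟨fun h => h.1, fun h => ⟨h, ?_⟩⟩
          rw [hFibdef, Finset.mem_filter] at hw
          obtain ⟨-, q₀, hq₀, hco⟩ := hw
          exact co_trans S.T0_closed hco (S.co_common (S.star s) hq₀ h)
        rw [hsame, S.deg_card]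
      · simp only [hw, if_false]
        rw [Finset.card_eq_zero, Finset.filter_eq_empty_iff]
        intro b _ hcon
        rw [hPdef] at hcon
        apply hw
        rw [hFibdef, Finset.mem_filter]
        exact ⟨Finset.mem_univ w, ⟨b, hcon.1, hcon.2⟩⟩
    calc ∑ w : X, (Finset.univ.filter (fun b => P (w, b))).card
        = ∑ w : X, if w ∈ Fib then S.val (S.star s) else 0 :=
          Finset.sum_congr rfl fun w _ => hfib w
      _ = ∑ w ∈ Fib, S.val (S.star s) := by
          rw [Finset.sum_ite_mem, Finset.univ_inter]
      _ = Fib.card * S.val (S.star s) := by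
          rw [Finset.sum_const, smul_eq_mul]
  have hB2 : (Finset.univ.filter P).card = Cst.card * S.val s := by
    rw [card_pairs_snd P]
    have hfib : ∀ q : X,
        (Finset.univ.filter (fun a => P (a, q))).card
          = if q ∈ Cst then S.val s else 0 := by
      intro q
      by_cases hq : q ∈ Cst
      · simp only [hq, if_true]
        rw [hCstdef, Finset.mem_filter] at hq
        have hsame : Finset.univ.filter (fun a => P (a, q))
            = Finset.univ.filter (fun a => (q, a) ∈ S.r s) := by
          ext a
          simp only [Finset.mem_filter, Finset.mem_univ, true_and, hPdef]
          exact ⟨fun h => S.mem_r_star.mp h.1, fun h => ⟨S.mem_r_star.mpr h, hq.2⟩⟩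
        rw [hsame, S.deg_card]
      · simp only [hq, if_false]
        rw [Finset.card_eq_zero, Finset.filter_eq_empty_iff]
        intro a _ hcon
        rw [hPdef] at hcon
        apply hq
        rw [hCstdef, Finset.mem_filter]
        exact ⟨Finset.mem_univ q, hcon.2⟩
    calc ∑ q : X, (Finset.univ.filter (fun a => P (a, q))).card
        = ∑ q : X, if q ∈ Cst then S.val s else 0 :=
          Finset.sum_congr rfl fun q _ => hfib q
      _ = ∑ q ∈ Cst, S.val s := by rw [Finset.sum_ite_mem, Finset.univ_inter]
      _ = Cst.card * S.val s := by rw [Finset.sum_const, smul_eq_mul]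
  have hFibCst : Fib.card = Cst.card := by
    have h := hB1.symm.trans hB2
    rw [S.val_star] at h
    exact Nat.eq_of_mul_eq_mul_right (S.val_pos s) h
  have hTcoCst : Tco.card = Cst.card := by
    rw [hTcodef, hCstdef, S.coset_card, S.coset_card]
  have hTcoFib : Tco = Fib :=
    Finset.eq_of_subset_of_card_le hsub (le_of_eq (hFibCst.trans hTcoCst.symm))
  have hzTco : z ∈ Tco := hTcoFib ▸ hzFib
  rw [hTcodef, Finset.mem_filter] at hzTco
  rw [← S.cls_eq hyz]
  exact hzTco.2

lemma T0_stronglyNormal : S.IsStronglyNormal S.T0 := by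
  refine ⟨S.T0_closed, fun i => ?_⟩
  intro k hk
  obtain ⟨m, hm, i', hi', hpos⟩ := hk
  simp only [Set.mem_singleton_iff] at hi'
  subst hi'
  obtain ⟨a, ha, t, ht, hpos2⟩ := hm
  simp only [Set.mem_singleton_iff] at ha
  subst ha
  obtain ⟨⟨x, w⟩, hxw⟩ := S.r_nonempty k
  obtain ⟨z, hxz, hzw⟩ := (S.pNum_pos_iff hxw).mp hpos
  obtain ⟨y, hxy, hyz⟩ := (S.pNum_pos_iff hxz).mp hpos2
  apply S.Econj_subset_T0 i'
  exact S.mem_Econj_of_exists hxw hxy (S.mem_r_star.mpr hzw)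
    (by rw [S.cls_eq hyz]; exact ht)

lemma thinResidue_subset_T0 : S.thinResidue ⊆ S.T0 :=
  Set.sInter_subset_of_mem S.T0_stronglyNormal

lemma star_mem_cmul {a b k : Fin (d + 1)} (h : k ∈ S.cmul {a} {b}) :
    S.star k ∈ S.cmul {S.star b} {S.star a} := by
  obtain ⟨⟨x, y⟩, hxy⟩ := S.r_nonempty k
  obtain ⟨z, hz1, hz2⟩ := (S.pNum_pos_iff hxy).mp (S.mem_cmul_pair.mp h)
  rw [S.mem_cmul_pair, S.pNum_pos_iff (S.mem_r_star.mpr hxy)]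
  exact ⟨z, S.mem_r_star.mpr hz2, S.mem_r_star.mpr hz1⟩

lemma mem_cmul_zero_self (j : Fin (d + 1)) : j ∈ S.cmul {(0 : Fin (d + 1))} {j} := by
  obtain ⟨⟨x, y⟩, hxy⟩ := S.r_nonempty j
  rw [S.mem_cmul_pair, S.pNum_pos_iff hxy]
  exact ⟨x, S.mem_r_zero_self x, hxy⟩

lemma cmul_zero_left {j k : Fin (d + 1)} (h : k ∈ S.cmul {(0 : Fin (d + 1))} {j}) :
    k = j := by
  obtain ⟨⟨x, y⟩, hxy⟩ := S.r_nonempty k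
  obtain ⟨z, hz1, hz2⟩ := (S.pNum_pos_iff hxy).mp (S.mem_cmul_pair.mp h)
  have hxz : x = z := S.mem_r_zero.mp hz1
  subst hxz
  exact S.r_unique hxy hz2

section Singular

variable {S} {T : Set (Fin (d + 1))} (hT : S.IsSingular T)
include hT

/-- Generators map `T` into `T`: `(c* c) z ⊆ T` for `z ∈ T`. -/
lemma gens_cmul_subset {u : Fin (d + 1)} (hu : u ∈ S.gens) :
    ∀ z ∈ T, S.cmul {u} {z} ⊆ T := by
  intro z hz w hw
  obtain ⟨c, hc⟩ := Set.mem_iUnion.mp hu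
  have h0 : (0 : Fin (d + 1)) ∈ S.thinRadical := S.zero_mem_thinRadical
  apply hT.2 0 h0 c z hz
  refine ⟨u, ⟨S.star c, ?_, c, rfl, ?_⟩, z, rfl, ?_⟩
  · exact S.mem_cmul_zero_self (S.star c)
  · exact S.mem_cmul_pair.mp hc
  · obtain ⟨w', hw', z', hz', hpos⟩ := hw
    simp only [Set.mem_singleton_iff] at hw' hz'
    rw [hw', hz'] at hpos
    exact hpos

omit hT in
lemma star_mem_gens {u : Fin (d + 1)} (hu : u ∈ S.gens) : S.star u ∈ S.gens := by
  obtain ⟨c, hc⟩ := Set.mem_iUnion.mp hu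
  apply Set.mem_iUnion.mpr ⟨c, _⟩
  have h := S.star_mem_cmul hc
  rwa [S.star_star] at h

/-- The set of classes `u` with `u T ⊆ T` and `u* T ⊆ T`. -/
def NT (S' : AssocScheme X d) (T' : Set (Fin (d + 1))) : Set (Fin (d + 1)) :=
  {u | (∀ z ∈ T', S'.cmul {u} {z} ⊆ T') ∧ (∀ z ∈ T', S'.cmul {S'.star u} {z} ⊆ T')}

omit hT in
lemma NT_closed : S.IsClosedSubset (NT S T) := by
  constructor
  · refine ⟨0, ?_, ?_⟩
    · intro z hz w hw
      rwa [S.cmul_zero_left hw]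
    · rw [S.star_zero]
      intro z hz w hw
      rwa [S.cmul_zero_left hw]
  · intro k hk
    obtain ⟨u0, hu0, b, hb, hpos⟩ := hk
    obtain ⟨a, ha, rfl⟩ := hu0
    have hk' : k ∈ S.cmul {S.star a} {b} := S.mem_cmul_pair.mpr hpos
    constructor
    · intro z hz w hw
      obtain ⟨⟨x, v⟩, hxv⟩ := S.r_nonempty w
      obtain ⟨ζ, hxζ, hζv⟩ := (S.pNum_pos_iff hxv).mp (S.mem_cmul_pair.mp hw)
      obtain ⟨y, hxy, hyζ⟩ := (S.pNum_pos_iff hxζ).mp hpos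
      have hm : S.cls y v ∈ T := by
        apply hb.1 z hz
        rw [S.mem_cmul_pair, S.pNum_pos_iff (S.mem_cls y v)]
        exact ⟨ζ, hyζ, hζv⟩
      apply ha.2 (S.cls y v) hm
      rw [S.mem_cmul_pair, S.pNum_pos_iff hxv]
      exact ⟨y, hxy, S.mem_cls y v⟩
    · intro z hz w hw
      have hk2 : S.star k ∈ S.cmul {S.star b} {a} := by
        have h := S.star_mem_cmul hk'
        rwa [S.star_star] at h
      obtain ⟨⟨x, v⟩, hxv⟩ := S.r_nonempty w
      obtain ⟨ζ, hxζ, hζv⟩ := (S.pNum_pos_iff hxv).mp (S.mem_cmul_pair.mp hw)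
      obtain ⟨y, hxy, hyζ⟩ := (S.pNum_pos_iff hxζ).mp (S.mem_cmul_pair.mp hk2)
      have hm : S.cls y v ∈ T := by
        apply ha.1 z hz
        rw [S.mem_cmul_pair, S.pNum_pos_iff (S.mem_cls y v)]
        exact ⟨ζ, hyζ, hζv⟩
      apply hb.2 (S.cls y v) hm
      rw [S.mem_cmul_pair, S.pNum_pos_iff hxv]
      exact ⟨y, hxy, S.mem_cls y v⟩

lemma gens_subset_NT : S.gens ⊆ NT S T := fun u hu =>
  ⟨gens_cmul_subset hT hu, gens_cmul_subset hT (star_mem_gens hu)⟩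

lemma T0_subset_NT : S.T0 ⊆ NT S T :=
  S.closure_min NT_closed (gens_subset_NT hT)

end Singular

end AssocScheme

/-- If `T` is a singular subset of `S`, then `O^ϑ(S)O_ϑ(S) ⊆ T`. -/
theorem cmul_thinResidue_thinRadical_subset_of_isSingular
    {X : Type*} [Fintype X] [Nonempty X] {d : ℕ} (S : AssocScheme X d)
    (T : Set (Fin (d + 1))) (hT : S.IsSingular T) :
    S.cmul S.thinResidue S.thinRadical ⊆ T := by
  intro k hk
  obtain ⟨u, hu, v, hv, hpos⟩ := hk
  have huT0 : u ∈ S.T0 := S.thinResidue_subset_T0 hu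
  have huNT : u ∈ AssocScheme.NT S T := AssocScheme.T0_subset_NT hT huT0
  have hvT : v ∈ T := hT.1 hv
  exact huNT.1 v hvT (S.mem_cmul_pair.mpr hpos)
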